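/- Let Γ be a non-elementary Gromov hyperbolic group with invariant strongly hyperbolic metric d of growth exponent δ, and let φ₁, φ₂ be pointwise nonnegative positive definite functions on Γ with δ(φ₁), δ(φ₂) ≥ δ/2. If the GNS representation π_{φ₁} is weakly contained in π_{φ₂}, then δ(φ₁) ≤ δ(φ₂). In particular, unitarily equivalent such representations have equal critical exponents. -/

import Mathlib

open Filter MeasureTheory
open scoped RealInnerProductSpace ENNReal

/-- An invariant metric on a discrete group with uniformly locally finite balls. -/
structure InvMetric (Γ : Type*) [Group Γ] where
  d : Γ → Γ → ℝ
  symm : ∀ g h, d g h = d h g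
  triangle : ∀ g h k, d g k ≤ d g h + d h k
  refl : ∀ g, d g g = 0
  eq_of_dist_eq_zero : ∀ g h, d g h = 0 → g = h
  invariant : ∀ g x y, d (g * x) (g * y) = d x y
  finiteBalls : ∀ r : ℝ, {g : Γ | d g 1 ≤ r}.Finite

variable {Γ : Type*} [Group Γ]

/-- The growth exponent `δ = limsup_r (1/r) log |B_r|`. -/
noncomputable def growthExp (M : InvMetric Γ) : ℝ :=
  limsup (fun r : ℝ => Real.log (Nat.card {g : Γ | M.d g 1 ≤ r}) / r) atTop

/-- The critical exponent of a nonnegative function: the abscissa of convergence of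
the Poincaré series `∑_g e^{-t d(g,e)} f(g)` (infimum over nonnegative `t`). -/
noncomputable def critExp (M : InvMetric Γ) (f : Γ → ℝ) : ℝ :=
  sInf {t : ℝ | 0 ≤ t ∧ Summable fun g : Γ => Real.exp (-t * M.d g 1) * f g}

/-- The operator norm of `λ(f)` on `ℓ²(Γ)` for the left regular representation,
realized as the supremum of `|⟨λ(f)u, w⟩|` over finitely supported `u, w` of
`ℓ²`-norm at most one. -/
noncomputable def regNorm (f : Γ →₀ ℝ) : ℝ :=
  sSup {c : ℝ | ∃ u w : Γ →₀ ℝ,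
    (∑ x ∈ u.support, u x ^ 2) ≤ 1 ∧ (∑ x ∈ w.support, w x ^ 2) ≤ 1 ∧
    c = |∑ g ∈ f.support, ∑ x ∈ w.support, f g * u (g⁻¹ * x) * w x|}

/-- `π(f) = ∑_g f(g) π(g)` as a bounded operator. -/
noncomputable def opOf {H : Type*} [NormedAddCommGroup H] [InnerProductSpace ℝ H]
    (π : Γ →* (H ≃ₗᵢ[ℝ] H)) (f : Γ →₀ ℝ) : H →L[ℝ] H :=
  ∑ g ∈ f.support, f g • ((π g).toContinuousLinearEquiv : H →L[ℝ] H)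

/-- The Gromov product `(x,y)_o`. -/
noncomputable def gromov (M : InvMetric Γ) (x y o : Γ) : ℝ :=
  (M.d x o + M.d y o - M.d x y) / 2

/-- Gromov hyperbolicity. -/
def IsHyperbolic (M : InvMetric Γ) : Prop :=
  ∃ C : ℝ, ∀ x y z o : Γ, min (gromov M x z o) (gromov M z y o) - C ≤ gromov M x y o

/-- Strong hyperbolicity in the sense of Mineyev--Yu / Nica--Spakula. -/
def IsStronglyHyperbolic (M : InvMetric Γ) : Prop :=
  ∃ ε > (0 : ℝ), ∀ x y z o : Γ,
    Real.exp (-ε * gromov M x y o) ≤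
      Real.exp (-ε * gromov M x z o) + Real.exp (-ε * gromov M z y o)

/-- Roughly geodesic. -/
def IsRoughlyGeodesic (M : InvMetric Γ) : Prop :=
  ∃ C : ℝ, 0 ≤ C ∧ ∀ x y : Γ, ∀ t : ℝ, 0 ≤ t → t ≤ M.d x y →
    ∃ z : Γ, |M.d x z - t| ≤ C ∧ |M.d z y - (M.d x y - t)| ≤ C

/-- `π` has almost invariant vectors (equivalently, `1 ≺ π`). -/
def HasAlmostInvariantVectors {H : Type*} [NormedAddCommGroup H]
    [InnerProductSpace ℝ H] (π : Γ →* (H ≃ₗᵢ[ℝ] H)) : Prop :=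
  ∀ (S : Finset Γ) (ε : ℝ), 0 < ε → ∃ w : H, ‖w‖ = 1 ∧ ∀ g ∈ S, ‖π g w - w‖ < ε

/-- The ball average `Avr_r(π) = (1/|B_r|) ∑_{g∈B_r} π(g)`. -/
noncomputable def ballAvg {H : Type*} [NormedAddCommGroup H] [InnerProductSpace ℝ H]
    (M : InvMetric Γ) (π : Γ →* (H ≃ₗᵢ[ℝ] H)) (r : ℝ) : H →L[ℝ] H :=
  (Nat.card {g : Γ | M.d g 1 ≤ r} : ℝ)⁻¹ •
    ∑ g ∈ (M.finiteBalls r).toFinset, ((π g).toContinuousLinearEquiv : H →L[ℝ] H)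


namespace StmtAux
variable {Γ : Type*} [Group Γ]

lemma d_nonneg (M : InvMetric Γ) (g h : Γ) : 0 ≤ M.d g h := by
  have h1 := M.triangle g h g
  have h2 := M.refl g
  have h3 := M.symm g h
  linarith [M.symm h g]

lemma d_inv (M : InvMetric Γ) (g : Γ) : M.d g⁻¹ 1 = M.d g 1 := by
  have h1 := M.invariant g g⁻¹ 1
  simp only [mul_inv_cancel, mul_one] at h1
  rw [← h1]; exact M.symm 1 g

/-- the ball as a finset -/
noncomputable def ball (M : InvMetric Γ) (r : ℝ) : Finset Γ := (M.finiteBalls r).toFinset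

lemma mem_ball {M : InvMetric Γ} {r : ℝ} {g : Γ} : g ∈ ball M r ↔ M.d g 1 ≤ r :=
  (M.finiteBalls r).mem_toFinset

lemma one_mem_ball {M : InvMetric Γ} {r : ℝ} (hr : 0 ≤ r) : (1 : Γ) ∈ ball M r := by
  rw [mem_ball, M.refl]; exact hr

lemma ball_mono {M : InvMetric Γ} {r s : ℝ} (h : r ≤ s) : ball M r ⊆ ball M s := by
  intro g hg; rw [mem_ball] at *; linarith

lemma d_conj_le (M : InvMetric Γ) (x k : Γ) :
    M.d (x⁻¹ * k * x) 1 ≤ M.d k 1 + 2 * M.d x 1 := by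
  have h1 : M.d (x⁻¹ * k * x) 1 = M.d (k * x) x := by
    have := M.invariant x (x⁻¹ * k * x) 1
    rw [mul_one] at this
    rw [← this]; congr 1; group
  have h2 := M.triangle (k * x) k 1
  have h3 := M.triangle k 1 x
  have h4 : M.d (k * x) k = M.d x 1 := by
    have := M.invariant k x 1
    rw [mul_one] at this
    rw [← this]
  have h5 := M.triangle (k*x) x 1
  have h6 := M.triangle (k*x) k x
  have h7 := M.triangle k 1 x
  have h8 : M.d 1 x = M.d x 1 := M.symm 1 x
  -- d(kx, x) ≤ d(kx,k) + d(k,1) + d(1,x) = d(x,1)+d(k,1)+d(x,1)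
  have h9 := M.triangle (k*x) k x
  have h10 := M.triangle k 1 x
  rw [h1]
  calc M.d (k*x) x ≤ M.d (k*x) k + M.d k x := M.triangle _ _ _
    _ ≤ M.d x 1 + (M.d k 1 + M.d 1 x) := by
        have := M.triangle k 1 x; rw [h4]; linarith
    _ = M.d k 1 + 2 * M.d x 1 := by rw [h8]; ring

lemma d_ge_conj (M : InvMetric Γ) (x k : Γ) :
    M.d k 1 ≥ M.d (x⁻¹ * k * x) 1 - 2 * M.d x 1 := by
  linarith [d_conj_le M x k]

/-- Growth bound from `growthExp`. -/
lemma growth_bound (M : InvMetric Γ) (hne : 0 < growthExp M) {ε : ℝ} (hε : 0 < ε) :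
    ∃ C : ℝ, 1 ≤ C ∧ ∀ ρ : ℝ, 0 ≤ ρ →
      ((ball M ρ).card : ℝ) ≤ C * Real.exp ((growthExp M + ε) * ρ) := by
  classical
  set u : ℝ → ℝ := fun r => Real.log (Nat.card {g : Γ | M.d g 1 ≤ r}) / r with hu
  have hS : {a : ℝ | ∀ᶠ r in atTop, u r ≤ a}.Nonempty := by
    by_contra hemp
    rw [Set.not_nonempty_iff_eq_empty] at hemp
    have : growthExp M = 0 := by
      rw [growthExp, limsup_eq]
      simp only [hu] at hemp
      rw [hemp]
      exact Real.sInf_empty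
    linarith
  have hbdd : BddBelow {a : ℝ | ∀ᶠ r in atTop, u r ≤ a} := by
    refine ⟨0, fun a ha => ?_⟩
    by_contra hlt
    push_neg at hlt
    have hev : ∀ᶠ r in atTop, u r ≤ a := ha
    have hpos : ∀ᶠ r : ℝ in atTop, 0 ≤ u r := by
      filter_upwards [eventually_ge_atTop (1:ℝ)] with r hr
      have hr0 : (0:ℝ) < r := by linarith
      have hcard : 1 ≤ Nat.card {g : Γ | M.d g 1 ≤ r} := by
        rw [Nat.card_eq_card_finite_toFinset (M.finiteBalls r)]
        refine Finset.card_pos.2 ⟨1, ?_⟩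
        exact (M.finiteBalls r).mem_toFinset.2 (by simp [M.refl]; linarith)
      have : (1:ℝ) ≤ (Nat.card {g : Γ | M.d g 1 ≤ r} : ℝ) := by exact_mod_cast hcard
      have := Real.log_nonneg this
      positivity
    have : ∀ᶠ r : ℝ in atTop, (0:ℝ) ≤ a := by
      filter_upwards [hev, hpos] with r h1 h2; linarith
    have := this.exists
    obtain ⟨r, hr⟩ := this
    linarith
  have hlt : growthExp M < growthExp M + ε := by linarith
  have : ∃ b ∈ {a : ℝ | ∀ᶠ r in atTop, u r ≤ a}, b < growthExp M + ε := by
    rw [← csInf_lt_iff hbdd hS]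
    exact hlt
  obtain ⟨b, hbmem, hblt⟩ := this
  obtain ⟨R₀, hR₀⟩ := eventually_atTop.1 hbmem
  set R₁ : ℝ := max R₀ 1 with hR₁
  have hC0' : (0:ℝ) ≤ ((ball M R₁).card : ℝ) := Nat.cast_nonneg _
  refine ⟨((ball M R₁).card : ℝ) + 1, by linarith, fun ρ hρ => ?_⟩
  have hexp1 : (1:ℝ) ≤ Real.exp ((growthExp M + ε) * ρ) := by
    rw [Real.one_le_exp_iff]
    have : 0 ≤ growthExp M + ε := by linarith
    exact mul_nonneg this hρ
  rcases le_or_gt ρ R₁ with hcase | hcase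
  · have hsub : ball M ρ ⊆ ball M R₁ := ball_mono hcase
    have := Finset.card_le_card hsub
    have h2 : ((ball M ρ).card : ℝ) ≤ ((ball M R₁).card : ℝ) := by exact_mod_cast this
    have h3 : (0:ℝ) ≤ ((ball M R₁).card : ℝ) := Nat.cast_nonneg _
    nlinarith
  · have hρR : R₀ ≤ ρ := le_trans (le_max_left _ _) hcase.le
    have hρ1 : (1:ℝ) ≤ ρ := le_trans (le_max_right _ _) hcase.le
    have hρ0 : (0:ℝ) < ρ := by linarith
    have hub := hR₀ ρ hρR
    have hcardpos : 0 < Nat.card {g : Γ | M.d g 1 ≤ ρ} := by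
      rw [Nat.card_eq_card_finite_toFinset (M.finiteBalls ρ)]
      refine Finset.card_pos.2 ⟨1, ?_⟩
      exact (M.finiteBalls ρ).mem_toFinset.2 (by simp [M.refl]; linarith)
    have hlog : Real.log (Nat.card {g : Γ | M.d g 1 ≤ ρ}) ≤ b * ρ := by
      have := hub
      rw [hu] at this
      simp only at this
      calc Real.log (Nat.card {g : Γ | M.d g 1 ≤ ρ})
          = (Real.log (Nat.card {g : Γ | M.d g 1 ≤ ρ}) / ρ) * ρ := by field_simp
        _ ≤ b * ρ := by apply mul_le_mul_of_nonneg_right this hρ0.le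
    have hcard : ((ball M ρ).card : ℝ) = (Nat.card {g : Γ | M.d g 1 ≤ ρ} : ℝ) := by
      rw [Nat.card_eq_card_finite_toFinset (M.finiteBalls ρ)]; rfl
    have hle : ((ball M ρ).card : ℝ) ≤ Real.exp (b * ρ) := by
      rw [hcard, ← Real.log_le_iff_le_exp (by exact_mod_cast hcardpos)]
      exact hlog
    have : Real.exp (b * ρ) ≤ Real.exp ((growthExp M + ε) * ρ) := by
      apply Real.exp_le_exp.2
      nlinarith
    have hC0 : (0:ℝ) ≤ ((ball M R₁).card : ℝ) := Nat.cast_nonneg _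
    have hC1 : (1:ℝ) ≤ ((ball M R₁).card : ℝ) + 1 := by linarith
    nlinarith [Real.exp_pos (b*ρ), Real.exp_pos ((growthExp M + ε)*ρ)]

end StmtAux
namespace StmtAux

lemma geom_tail {y : ℝ} (h0 : 0 ≤ y) (h1 : y < 1) (n : ℕ) :
    ∑ i ∈ Finset.range n, y ^ i ≤ (1 - y)⁻¹ := by
  have h2 : (0:ℝ) < 1 - y := by linarith
  have h3 : ∑ i ∈ Finset.range n, y ^ i = (1 - y ^ n) / (1 - y) := by
    rw [geom_sum_eq (by intro h; rw [h] at h1; exact lt_irrefl 1 h1)]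
    rw [← neg_div_neg_eq]
    ring_nf
  rw [h3]
  have h4 : (0:ℝ) ≤ y ^ n := pow_nonneg h0 n
  calc (1 - y ^ n) / (1 - y) ≤ 1 / (1 - y) :=
        by gcongr <;> linarith
    _ = (1 - y)⁻¹ := one_div _

variable {Γ : Type*} [Group Γ]

lemma hyp_const (M : InvMetric Γ) (hhyp : IsStronglyHyperbolic M) :
    ∃ C : ℝ, 0 ≤ C ∧ ∀ x y z o : Γ,
      min (gromov M x z o) (gromov M z y o) - C ≤ gromov M x y o := by
  obtain ⟨ε, hε, h⟩ := hhyp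
  have hlog2 : (0:ℝ) ≤ Real.log 2 := Real.log_nonneg one_le_two
  refine ⟨Real.log 2 / ε, by positivity, fun x y z o => ?_⟩
  set A := gromov M x z o with hA
  set B := gromov M z y o with hB
  set G := gromov M x y o with hG
  set m := min A B with hm
  have hA' : Real.exp (-ε * A) ≤ Real.exp (-ε * m) :=
    Real.exp_le_exp.2 (by nlinarith [min_le_left A B])
  have hB' : Real.exp (-ε * B) ≤ Real.exp (-ε * m) :=
    Real.exp_le_exp.2 (by nlinarith [min_le_right A B])
  have h2 : Real.exp (-ε * G) ≤ 2 * Real.exp (-ε * m) := by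
    rw [two_mul]; exact (h x y z o).trans (add_le_add hA' hB')
  have h3 : -ε * G ≤ Real.log 2 + -ε * m := by
    have := Real.log_le_log (Real.exp_pos _) h2
    rwa [Real.log_exp, Real.log_mul two_ne_zero (Real.exp_ne_zero _), Real.log_exp] at this
  have h4 : (m - G) * ε ≤ Real.log 2 := by nlinarith
  have h5 : m - G ≤ Real.log 2 / ε := (le_div_iff₀ hε).2 h4
  linarith

end StmtAux
namespace StmtAux
variable {Γ : Type*} [Group Γ]

lemma gromov_nonneg (M : InvMetric Γ) (x y o : Γ) : 0 ≤ gromov M x y o := by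
  have h1 := M.triangle x o y
  have h2 := M.symm o y
  simp only [gromov]
  linarith

lemma gromov_le (M : InvMetric Γ) (x y o : Γ) : gromov M x y o ≤ M.d x o := by
  have h1 := M.triangle y x o
  have h2 := M.symm y x
  simp only [gromov]
  linarith

/-- first gromov identity : d h 1 = (h,k)_1 + (1,k)_h -/
lemma gromov_add_fst (M : InvMetric Γ) (h k : Γ) :
    M.d h 1 = gromov M h k 1 + gromov M (1:Γ) k h := by
  simp only [gromov]
  have e1 := M.symm (1:Γ) h
  have e2 := M.symm k h
  have e3 := M.symm (1:Γ) k
  linarith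

/-- second gromov identity : d h k = (d k 1 - (h,k)_1) + (1,k)_h -/
lemma gromov_add_snd (M : InvMetric Γ) (h k : Γ) :
    M.d h k = (M.d k 1 - gromov M h k 1) + gromov M (1:Γ) k h := by
  simp only [gromov]
  have e1 := M.symm (1:Γ) h
  have e2 := M.symm k h
  have e3 := M.symm (1:Γ) k
  linarith

lemma gromov_le_d (M : InvMetric Γ) (h k : Γ) : gromov M h k 1 ≤ M.d k 1 := by
  have h2 := gromov_add_snd M h k
  have h4 : gromov M (1:Γ) k h ≤ M.d k h := by
    have t1 := M.triangle (1:Γ) k h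
    simp only [gromov]
    linarith
  have h5 := M.symm k h
  linarith

/-- Projection lemma: a point `h` is close to a rough-geodesic point `z`
at parameter `n ≈ (h,k)_1` on `[1,k]`. -/
lemma proj_bound (M : InvMetric Γ) {Ch Crg : ℝ} (hCrg : 0 ≤ Crg)
    (hypG : ∀ x y z o : Γ, min (gromov M x z o) (gromov M z y o) - Ch ≤ gromov M x y o)
    {k h z : Γ} {n : ℕ}
    (hz1 : |M.d 1 z - n| ≤ Crg) (hz2 : |M.d z k - (M.d 1 k - n)| ≤ Crg)
    (hn : (n:ℝ) ≤ gromov M h k 1) :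
    M.d h z ≤ gromov M (1:Γ) k h + (gromov M h k 1 - n) + 3*Crg + 2*Ch := by
  obtain ⟨hz1a, hz1b⟩ := abs_le.1 hz1
  obtain ⟨hz2a, hz2b⟩ := abs_le.1 hz2
  have e1 := M.symm (1:Γ) z
  have e2 := M.symm z k
  have e3 := M.symm (1:Γ) k
  -- gromov k z 1 ≥ n - Crg
  have hkz : (n:ℝ) - Crg ≤ gromov M k z 1 := by
    simp only [gromov]
    linarith
  have hmin : (n:ℝ) - Crg ≤ min (gromov M h k 1) (gromov M k z 1) :=
    le_min (by linarith) hkz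
  have hG : (n:ℝ) - Crg - Ch ≤ gromov M h z 1 :=
    le_trans (by linarith) (hypG h z k 1)
  have hdhz : M.d h z = M.d h 1 + M.d z 1 - 2 * gromov M h z 1 := by
    simp only [gromov]; ring
  have hfst := gromov_add_fst M h k
  linarith

set_option maxHeartbeats 1000000 in
/-- The key convolution estimate on a strongly hyperbolic group. -/
lemma conv_bound (M : InvMetric Γ) (hne : 0 < growthExp M)
    (hhyp : IsStronglyHyperbolic M) (hrg : IsRoughlyGeodesic M)
    {α β : ℝ} (h0 : 0 ≤ α) (hab : α < β) (hgt : growthExp M < α + β) :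
    ∃ R : ℝ, 0 < R ∧ ∀ (k : Γ) (E : Finset Γ),
      ∑ h ∈ E, Real.exp (-α * M.d h 1) * Real.exp (-β * M.d h k)
        ≤ R * Real.exp (-α * M.d k 1) := by
  classical
  set δ := growthExp M with hδ
  set ε' : ℝ := (α + β - δ) / 2 with hε'
  have hε'pos : 0 < ε' := by simp only [hε']; linarith
  obtain ⟨Cg, hCg1, hCg⟩ := growth_bound M hne hε'pos
  obtain ⟨Ch, hCh0, hypG⟩ := hyp_const M hhyp
  obtain ⟨Crg, hCrg0, hRG⟩ := hrg
  set C₇ : ℝ := 2 + 3*Crg + 2*Ch with hC₇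
  have hC₇0 : 0 ≤ C₇ := by simp only [hC₇]; linarith
  set x : ℝ := Real.exp (β - α) with hx
  have hx1 : 1 < x := by
    rw [hx, Real.one_lt_exp_iff]; linarith
  set y : ℝ := Real.exp ((δ + ε') - (α + β)) with hy
  have hy1 : y < 1 := by
    rw [hy, Real.exp_lt_one_iff]
    simp only [hε']; linarith
  have hy0 : 0 < y := Real.exp_pos _
  set K₀ : ℝ := Cg * Real.exp ((δ + ε') * C₇) with hK₀
  have hK₀0 : 0 < K₀ := mul_pos (by linarith) (Real.exp_pos _)
  have hxm : (0:ℝ) < x - 1 := by linarith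
  have hym : (0:ℝ) < 1 - y := by linarith
  refine ⟨K₀ * x * (x * (x - 1)⁻¹) * (1 - y)⁻¹,
    mul_pos (mul_pos (mul_pos hK₀0 (by linarith)) (mul_pos (by linarith) (inv_pos.2 hxm)))
      (inv_pos.2 hym), fun k E => ?_⟩
  set D := M.d k 1 with hD
  have hD0 : 0 ≤ D := d_nonneg M k 1
  -- rough geodesic points
  have hzex : ∀ n : ℕ, (n:ℝ) ≤ D → ∃ z : Γ,
      |M.d 1 z - n| ≤ Crg ∧ |M.d z k - (M.d 1 k - n)| ≤ Crg := by
    intro n hn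
    have h1k : M.d 1 k = D := M.symm 1 k
    obtain ⟨z, hz1, hz2⟩ := hRG 1 k n (Nat.cast_nonneg n) (by rw [h1k]; exact hn)
    exact ⟨z, hz1, hz2⟩
  set zf : ℕ → Γ := fun n => if h : (n:ℝ) ≤ D then (hzex n h).choose else 1 with hzf
  -- key function
  set κ : Γ → ℕ × ℕ := fun h => (⌊gromov M h k 1⌋₊, ⌊gromov M (1:Γ) k h⌋₊) with hκ
  -- weight
  set w : Γ → ℝ := fun h => Real.exp (-α * M.d h 1) * Real.exp (-β * M.d h k) with hw
  -- pointwise weight bound on the fiber over (n, m)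
  have hwle : ∀ h : Γ, w h ≤ Real.exp (-β * D) *
      (Real.exp ((β - α) * ((κ h).1 + 1)) * Real.exp (-(α+β) * (κ h).2)) := by
    intro h
    have hp0 : 0 ≤ gromov M h k 1 := gromov_nonneg M h k 1
    have ha0 : 0 ≤ gromov M (1:Γ) k h := gromov_nonneg M (1:Γ) k h
    have hple : gromov M h k 1 < (κ h).1 + 1 := Nat.lt_floor_add_one _
    have hage : ((κ h).2 : ℝ) ≤ gromov M (1:Γ) k h := Nat.floor_le ha0
    have hwid : w h = Real.exp (-β * D) *
        (Real.exp ((β - α) * gromov M h k 1) * Real.exp (-(α+β) * gromov M (1:Γ) k h)) := by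
      rw [hw]
      simp only
      rw [← Real.exp_add, ← Real.exp_add, ← Real.exp_add]
      congr 1
      have hfst := gromov_add_fst M h k
      have hsnd := gromov_add_snd M h k
      rw [hfst, hsnd]
      ring
    rw [hwid]
    have h1 : Real.exp ((β - α) * gromov M h k 1) ≤ Real.exp ((β - α) * ((κ h).1 + 1)) :=
      Real.exp_le_exp.2 (by nlinarith)
    have h2 : Real.exp (-(α+β) * gromov M (1:Γ) k h) ≤ Real.exp (-(α+β) * (κ h).2) :=
      Real.exp_le_exp.2 (by nlinarith)
    have := mul_le_mul h1 h2 (Real.exp_pos _).le (Real.exp_pos _).le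
    exact mul_le_mul_of_nonneg_left this (Real.exp_pos _).le
  -- fiber cardinality bound
  have hfib : ∀ n m : ℕ, ((E.filter (fun h => κ h = (n, m))).card : ℝ) ≤
      Cg * Real.exp ((δ + ε') * ((m:ℝ) + C₇)) := by
    intro n m
    rcases (E.filter (fun h => κ h = (n, m))).eq_empty_or_nonempty with hemp | ⟨h₀, hh₀⟩
    · rw [hemp]
      simp only [Finset.card_empty, Nat.cast_zero]
      exact mul_nonneg (by linarith) (Real.exp_pos _).le
    · -- n ≤ D
      have hh₀' := Finset.mem_filter.1 hh₀
      have hκh₀ : κ h₀ = (n, m) := hh₀'.2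
      have hpn : (n:ℝ) ≤ gromov M h₀ k 1 := by
        have : n = ⌊gromov M h₀ k 1⌋₊ := by
          have := congrArg Prod.fst hκh₀; simpa [hκ] using this.symm
        rw [this]
        exact Nat.floor_le (gromov_nonneg M h₀ k 1)
      have hnD : (n:ℝ) ≤ D := le_trans hpn (gromov_le_d M h₀ k)
      set z := zf n with hz
      have hzdef : z = (hzex n hnD).choose := by rw [hz, hzf]; simp [hnD]
      obtain ⟨hz1, hz2⟩ := hzdef ▸ (hzex n hnD).choose_spec
      -- each member maps into ball of radius m + C₇ around z
      have hmap : ∀ h ∈ E.filter (fun h => κ h = (n, m)),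
          z⁻¹ * h ∈ ball M ((m:ℝ) + C₇) := by
        intro h hh
        have hh' := Finset.mem_filter.1 hh
        have hκh : κ h = (n, m) := hh'.2
        have hn' : n = ⌊gromov M h k 1⌋₊ := by
          have := congrArg Prod.fst hκh; simpa [hκ] using this.symm
        have hm' : m = ⌊gromov M (1:Γ) k h⌋₊ := by
          have := congrArg Prod.snd hκh; simpa [hκ] using this.symm
        have hpn' : (n:ℝ) ≤ gromov M h k 1 := by
          rw [hn']; exact Nat.floor_le (gromov_nonneg M h k 1)
        have hproj := proj_bound M hCrg0 hypG hz1 hz2 hpn'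
        have hdinv : M.d (z⁻¹ * h) 1 = M.d h z := by
          have := M.invariant z (z⁻¹ * h) 1
          rw [mul_one] at this
          rw [← this]; congr 1; group
        rw [mem_ball, hdinv]
        have hb1 : gromov M (1:Γ) k h < (m:ℝ) + 1 := by
          rw [hm']; exact Nat.lt_floor_add_one _
        have hb2 : gromov M h k 1 - n < 1 := by
          rw [hn']
          have := Nat.lt_floor_add_one (gromov M h k 1)
          linarith
        simp only [hC₇]
        linarith
      have hinj : Set.InjOn (fun h => z⁻¹ * h) (E.filter (fun h => κ h = (n, m)) : Set Γ) := by
        intro a _ b _ hab'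
        simpa using hab'
      have hcard := Finset.card_le_card_of_injOn (fun h => z⁻¹ * h) hmap hinj
      have := hCg ((m:ℝ) + C₇)
        (by have hm0 : (0:ℝ) ≤ (m:ℝ) := Nat.cast_nonneg m; linarith)
      calc ((E.filter (fun h => κ h = (n, m))).card : ℝ)
          ≤ ((ball M ((m:ℝ) + C₇)).card : ℝ) := by exact_mod_cast hcard
        _ ≤ Cg * Real.exp ((δ + ε') * ((m:ℝ) + C₇)) := this
  -- assemble
  have hsplit : ∑ h ∈ E, w h =
      ∑ q ∈ E.image κ, ∑ h ∈ E.filter (fun h => κ h = q), w h :=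
    (Finset.sum_fiberwise_of_maps_to (fun h hh => Finset.mem_image_of_mem κ hh) w).symm
  set N := ⌊D⌋₊ with hN
  set Mm := (E.image κ).sup (fun q => q.2) with hMm
  have hfibsum : ∀ q ∈ E.image κ,
      ∑ h ∈ E.filter (fun h => κ h = q), w h ≤
        (K₀ * Real.exp (-β * D)) * (x ^ (q.1 + 1) * y ^ q.2) := by
    intro q hq
    have hbound : ∀ h ∈ E.filter (fun h => κ h = q), w h ≤
        Real.exp (-β * D) * (Real.exp ((β - α) * ((q.1:ℝ) + 1)) * Real.exp (-(α+β) * (q.2:ℝ))) := by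
      intro h hh
      have hκh : κ h = q := by
        have := (Finset.mem_filter.1 hh).2
        simpa using this
      have := hwle h
      rw [hκh] at this
      exact this
    have h1 := Finset.sum_le_card_nsmul _ _ _ hbound
    rw [nsmul_eq_mul] at h1
    have h3 : ((E.filter (fun h => κ h = q)).card : ℝ) ≤
        Cg * Real.exp ((δ + ε') * ((q.2:ℝ) + C₇)) := by
      have := hfib q.1 q.2
      rwa [Prod.mk.eta] at this
    have hbnn : (0:ℝ) ≤ Real.exp (-β * D) *
        (Real.exp ((β - α) * ((q.1:ℝ) + 1)) * Real.exp (-(α+β) * (q.2:ℝ))) :=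
      mul_nonneg (Real.exp_pos _).le (mul_nonneg (Real.exp_pos _).le (Real.exp_pos _).le)
    have h4 : ∑ h ∈ E.filter (fun h => κ h = q), w h ≤
        (Cg * Real.exp ((δ + ε') * ((q.2:ℝ) + C₇))) *
          (Real.exp (-β * D) * (Real.exp ((β - α) * ((q.1:ℝ) + 1)) * Real.exp (-(α+β) * (q.2:ℝ)))) :=
      h1.trans (mul_le_mul_of_nonneg_right h3 hbnn)
    refine h4.trans (le_of_eq ?_)
    have e₁ : (Cg * Real.exp ((δ + ε') * ((q.2:ℝ) + C₇))) *
        (Real.exp (-β * D) * (Real.exp ((β - α) * ((q.1:ℝ) + 1)) * Real.exp (-(α+β) * (q.2:ℝ)))) =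
        Cg * Real.exp ((δ + ε') * ((q.2:ℝ) + C₇) + (-β * D) + (β - α) * ((q.1:ℝ) + 1)
          + (-(α+β) * (q.2:ℝ))) := by
      rw [Real.exp_add, Real.exp_add, Real.exp_add]; ring
    have e₂ : (K₀ * Real.exp (-β * D)) * (x ^ (q.1 + 1) * y ^ q.2) =
        Cg * Real.exp ((δ + ε') * C₇ + (-β * D) + ((q.1:ℝ) + 1) * (β - α)
          + (q.2:ℝ) * (δ + ε' - (α+β))) := by
      rw [hK₀, hx, hy, ← Real.exp_nat_mul, ← Real.exp_nat_mul]
      rw [Real.exp_add, Real.exp_add, Real.exp_add]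
      push_cast
      ring
    rw [e₁, e₂]
    have : (δ + ε') * ((q.2:ℝ) + C₇) + (-β * D) + (β - α) * ((q.1:ℝ) + 1) + (-(α+β) * (q.2:ℝ))
        = (δ + ε') * C₇ + (-β * D) + ((q.1:ℝ) + 1) * (β - α) + (q.2:ℝ) * (δ + ε' - (α+β)) := by
      ring
    rw [this]
  have himg : ∀ q ∈ E.image κ, q ∈ Finset.range (N+1) ×ˢ Finset.range (Mm+1) := by
    intro q hq
    obtain ⟨h, hh, hκh⟩ := Finset.mem_image.1 hq
    rw [Finset.mem_product, Finset.mem_range, Finset.mem_range]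
    constructor
    · rw [Nat.lt_succ_iff, hN]
      apply Nat.le_floor
      have h1 : (q.1 : ℝ) ≤ gromov M h k 1 := by
        rw [← hκh]
        exact Nat.floor_le (gromov_nonneg M h k 1)
      exact h1.trans (gromov_le_d M h k)
    · rw [Nat.lt_succ_iff, hMm]
      exact Finset.le_sup (f := fun q : ℕ × ℕ => q.2) hq
  have hsum2 : ∑ q ∈ E.image κ, (x ^ (q.1 + 1) * y ^ q.2) ≤
      (∑ n ∈ Finset.range (N+1), x ^ (n+1)) * (∑ m ∈ Finset.range (Mm+1), y ^ m) := by
    rw [Finset.sum_mul_sum, ← Finset.sum_product']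
    apply Finset.sum_le_sum_of_subset_of_nonneg himg
    intro q _ _
    exact mul_nonneg (pow_nonneg (by linarith) _) (pow_nonneg hy0.le _)
  have hgeo1 : ∑ n ∈ Finset.range (N+1), x ^ (n+1) ≤
      x * (x * (x - 1)⁻¹) * Real.exp ((β - α) * D) := by
    have e1 : ∑ n ∈ Finset.range (N+1), x ^ (n+1) = x * ∑ n ∈ Finset.range (N+1), x ^ n := by
      rw [Finset.mul_sum]
      exact Finset.sum_congr rfl (fun n _ => by ring)
    rw [e1, geom_sum_eq (ne_of_gt hx1) (N+1)]
    have hxN : x ^ (N+1) ≤ x * Real.exp ((β - α) * D) := by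
      have h5 : x ^ (N+1) = x * x ^ N := by ring
      rw [h5]
      have hxn : x ^ N ≤ Real.exp ((β - α) * D) := by
        rw [hx, ← Real.exp_nat_mul]
        apply Real.exp_le_exp.2
        have hND : (N:ℝ) ≤ D := by rw [hN]; exact Nat.floor_le hD0
        rw [mul_comm]
        exact mul_le_mul_of_nonneg_left hND (by linarith)
      exact mul_le_mul_of_nonneg_left hxn (by linarith)
    have hA : (x^(N+1) - 1)/(x-1) ≤ (x * Real.exp ((β - α) * D)) * (x-1)⁻¹ := by
      rw [div_eq_mul_inv]
      exact mul_le_mul_of_nonneg_right (by linarith) (inv_pos.2 hxm).le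
    calc x * ((x^(N+1) - 1)/(x-1)) ≤ x * ((x * Real.exp ((β - α) * D)) * (x-1)⁻¹) :=
          mul_le_mul_of_nonneg_left hA (by linarith)
      _ = x * (x * (x - 1)⁻¹) * Real.exp ((β - α) * D) := by ring
  have hgeo2 : ∑ m ∈ Finset.range (Mm+1), y ^ m ≤ (1 - y)⁻¹ := geom_tail hy0.le hy1 _
  have hnn1 : (0:ℝ) ≤ ∑ m ∈ Finset.range (Mm+1), y ^ m :=
    Finset.sum_nonneg (fun m _ => pow_nonneg hy0.le m)
  have hnn2 : (0:ℝ) ≤ x * (x * (x - 1)⁻¹) * Real.exp ((β - α) * D) := by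
    have : (0:ℝ) ≤ (x-1)⁻¹ := (inv_pos.2 hxm).le
    have hx0 : (0:ℝ) < x := by linarith
    positivity
  have hKE : (0:ℝ) ≤ K₀ * Real.exp (-β * D) := mul_nonneg hK₀0.le (Real.exp_pos _).le
  calc ∑ h ∈ E, w h
      = ∑ q ∈ E.image κ, ∑ h ∈ E.filter (fun h => κ h = q), w h := hsplit
    _ ≤ ∑ q ∈ E.image κ, (K₀ * Real.exp (-β * D)) * (x ^ (q.1 + 1) * y ^ q.2) :=
        Finset.sum_le_sum hfibsum
    _ = (K₀ * Real.exp (-β * D)) * ∑ q ∈ E.image κ, (x ^ (q.1 + 1) * y ^ q.2) := by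
        rw [Finset.mul_sum]
    _ ≤ (K₀ * Real.exp (-β * D)) *
        ((∑ n ∈ Finset.range (N+1), x ^ (n+1)) * (∑ m ∈ Finset.range (Mm+1), y ^ m)) :=
        mul_le_mul_of_nonneg_left hsum2 hKE
    _ ≤ (K₀ * Real.exp (-β * D)) *
        ((x * (x * (x - 1)⁻¹) * Real.exp ((β - α) * D)) * (1 - y)⁻¹) := by
        apply mul_le_mul_of_nonneg_left ?_ hKE
        exact mul_le_mul hgeo1 hgeo2 hnn1 hnn2
    _ = (K₀ * x * (x * (x - 1)⁻¹) * (1 - y)⁻¹) *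
        (Real.exp (-β * D) * Real.exp ((β - α) * D)) := by ring
    _ = K₀ * x * (x * (x - 1)⁻¹) * (1 - y)⁻¹ * Real.exp (-α * D) := by
        rw [← Real.exp_add]
        congr 2
        ring

end StmtAux
namespace StmtAux
variable {Γ : Type*} [Group Γ]

open Classical in
/-- The truncated Poincaré weight as a finitely supported function. -/
noncomputable def ballWeight (M : InvMetric Γ) (β r : ℝ) : Γ →₀ ℝ where
  support := ball M r
  toFun := fun g => if M.d g 1 ≤ r then Real.exp (-β * M.d g 1) else 0
  mem_support_toFun := by
    intro g
    rw [mem_ball]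
    constructor
    · intro h; rw [if_pos h]; exact (Real.exp_pos _).ne'
    · intro h
      by_contra hc
      rw [if_neg hc] at h
      exact h rfl

lemma ballWeight_nonneg (M : InvMetric Γ) (β r : ℝ) (g : Γ) : 0 ≤ ballWeight M β r g := by
  show (0:ℝ) ≤ if M.d g 1 ≤ r then Real.exp (-β * M.d g 1) else 0
  split
  · exact (Real.exp_pos _).le
  · exact le_refl 0

lemma ballWeight_le (M : InvMetric Γ) (β r : ℝ) (g : Γ) :
    ballWeight M β r g ≤ Real.exp (-β * M.d g 1) := by
  show (if M.d g 1 ≤ r then Real.exp (-β * M.d g 1) else 0) ≤ _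
  split
  · exact le_refl _
  · exact (Real.exp_pos _).le

lemma ballWeight_symm (M : InvMetric Γ) (β r : ℝ) (g : Γ) :
    ballWeight M β r g⁻¹ = ballWeight M β r g := by
  show (if M.d g⁻¹ 1 ≤ r then Real.exp (-β * M.d g⁻¹ 1) else 0)
      = (if M.d g 1 ≤ r then Real.exp (-β * M.d g 1) else 0)
  rw [d_inv]

lemma ballWeight_support (M : InvMetric Γ) (β r : ℝ) :
    (ballWeight M β r).support = ball M r := rfl

lemma ballWeight_apply_of_mem (M : InvMetric Γ) (β r : ℝ) {g : Γ} (hg : M.d g 1 ≤ r) :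
    ballWeight M β r g = Real.exp (-β * M.d g 1) := by
  show (if M.d g 1 ≤ r then Real.exp (-β * M.d g 1) else 0) = _
  rw [if_pos hg]

lemma pow_bound' (M : InvMetric Γ) {α β R : ℝ} (hα : 0 ≤ α) (hαβ : α ≤ β) (hR0 : 0 < R)
    (hconv : ∀ (k : Γ) (E : Finset Γ),
      ∑ h ∈ E, Real.exp (-α * M.d h 1) * Real.exp (-β * M.d h k)
        ≤ R * Real.exp (-α * M.d k 1))
    (f : MonoidAlgebra ℝ Γ) (hf0 : ∀ g, 0 ≤ f.coeff g)
    (hfle : ∀ g, f.coeff g ≤ Real.exp (-β * M.d g 1)) :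
    ∀ (n : ℕ) (k : Γ), 0 ≤ (f ^ n).coeff k ∧ (f ^ n).coeff k ≤ R ^ n * Real.exp (-α * M.d k 1) := by
  classical
  intro n
  induction n with
  | zero =>
    intro k
    rw [pow_zero, MonoidAlgebra.one_def, MonoidAlgebra.coeff_single, Finsupp.single_apply]
    constructor
    · split <;> norm_num
    · rw [pow_zero, one_mul]
      split
      · next h =>
        rw [← h, M.refl, mul_zero, Real.exp_zero]
      · exact (Real.exp_pos _).le
  | succ n ih =>
    intro k
    rw [pow_succ]
    have hmul : (f ^ n * f).coeff k = ∑ a ∈ (f ^ n).coeff.support, (f ^ n).coeff a * f.coeff (a⁻¹ * k) := by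
      rw [MonoidAlgebra.coeff_mul]
      rw [Finsupp.sum]
      apply Finset.sum_congr rfl
      intro a _
      rw [Finsupp.sum]
      have : ∀ b ∈ f.coeff.support, (if a * b = k then (f ^ n).coeff a * f.coeff b else 0)
          = (if b = a⁻¹ * k then (f ^ n).coeff a * f.coeff b else 0) := by
        intro b _
        have hiff : (a * b = k) ↔ (b = a⁻¹ * k) := by
          constructor
          · intro h; rw [← h]; group
          · intro h; rw [h]; group
        simp only [hiff]
      rw [Finset.sum_congr rfl this, Finset.sum_ite_eq' f.coeff.support (a⁻¹ * k)
        (fun b => (f ^ n).coeff a * f.coeff b)]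
      split
      · rfl
      · next h =>
        rw [Finsupp.notMem_support_iff.1 h, mul_zero]
    constructor
    · rw [hmul]
      apply Finset.sum_nonneg
      intro a _
      exact mul_nonneg (ih a).1 (hf0 _)
    · rw [hmul]
      have hstep : ∑ a ∈ (f ^ n).coeff.support, (f ^ n).coeff a * f.coeff (a⁻¹ * k)
          ≤ ∑ a ∈ (f ^ n).coeff.support,
            (R ^ n * Real.exp (-α * M.d a 1)) * Real.exp (-β * M.d a k) := by
        apply Finset.sum_le_sum
        intro a _
        have h1 : f.coeff (a⁻¹ * k) ≤ Real.exp (-β * M.d (a⁻¹ * k) 1) := hfle _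
        have h2 : M.d (a⁻¹ * k) 1 = M.d a k := by
          have h3 := M.invariant a (a⁻¹ * k) 1
          rw [mul_one] at h3
          have h4 : a * (a⁻¹ * k) = k := by group
          rw [h4] at h3
          rw [← h3, M.symm]
        rw [h2] at h1
        exact mul_le_mul (ih a).2 h1 (hf0 _)
          (mul_nonneg (pow_nonneg hR0.le n) (Real.exp_pos _).le)
      refine hstep.trans ?_
      have : ∑ a ∈ (f ^ n).coeff.support,
          (R ^ n * Real.exp (-α * M.d a 1)) * Real.exp (-β * M.d a k)
          = R ^ n * ∑ a ∈ (f ^ n).coeff.support,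
            Real.exp (-α * M.d a 1) * Real.exp (-β * M.d a k) := by
        rw [Finset.mul_sum]
        apply Finset.sum_congr rfl
        intro a _
        ring
      rw [this, pow_succ]
      have h5 := hconv k ((f ^ n).coeff.support)
      calc R ^ n * ∑ a ∈ (f ^ n).coeff.support,
            Real.exp (-α * M.d a 1) * Real.exp (-β * M.d a k)
          ≤ R ^ n * (R * Real.exp (-α * M.d k 1)) :=
            mul_le_mul_of_nonneg_left h5 (pow_nonneg hR0.le n)
        _ = R ^ n * R * Real.exp (-α * M.d k 1) := by ring

end StmtAux
namespace StmtAux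
open scoped RealInnerProductSpace
variable {Γ : Type*} [Group Γ]
variable {H : Type*} [NormedAddCommGroup H] [InnerProductSpace ℝ H]

/-- view a finitely supported function as an element of the monoid algebra -/
def toMA (f : Γ →₀ ℝ) : MonoidAlgebra ℝ Γ := MonoidAlgebra.ofCoeff f

noncomputable def piCLM (π : Γ →* (H ≃ₗᵢ[ℝ] H)) : Γ →* (H →L[ℝ] H) where
  toFun g := ((π g).toContinuousLinearEquiv : H →L[ℝ] H)
  map_one' := by ext u; simp
  map_mul' g h := by ext u; simp [ContinuousLinearMap.mul_apply]

lemma opOf_eq (π : Γ →* (H ≃ₗᵢ[ℝ] H)) (f : MonoidAlgebra ℝ Γ) :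
    opOf π f.coeff = (MonoidAlgebra.lift ℝ (H →L[ℝ] H) Γ (piCLM π)) f := by
  rw [MonoidAlgebra.lift_apply]
  rfl

lemma opOf_mul (π : Γ →* (H ≃ₗᵢ[ℝ] H)) (f g : MonoidAlgebra ℝ Γ) :
    opOf π (f * g).coeff = opOf π f.coeff * opOf π g.coeff := by
  rw [opOf_eq, opOf_eq, opOf_eq, map_mul]

lemma opOf_pow (π : Γ →* (H ≃ₗᵢ[ℝ] H)) (f : MonoidAlgebra ℝ Γ) (n : ℕ) :
    opOf π (f ^ n).coeff = (opOf π f.coeff) ^ n := by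
  rw [opOf_eq, map_pow, ← opOf_eq]

lemma opOf_apply (π : Γ →* (H ≃ₗᵢ[ℝ] H)) (f : Γ →₀ ℝ) (u : H) :
    opOf π f u = ∑ g ∈ f.support, f g • (π g u) := by
  rw [opOf, ContinuousLinearMap.sum_apply]
  apply Finset.sum_congr rfl
  intro g _
  rw [ContinuousLinearMap.smul_apply]
  rfl

lemma opOf_inner (π : Γ →* (H ≃ₗᵢ[ℝ] H)) (f : Γ →₀ ℝ) (u w : H) :
    ⟪opOf π f u, w⟫ = ∑ g ∈ f.support, f g * ⟪π g u, w⟫ := by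
  rw [opOf_apply, sum_inner]
  apply Finset.sum_congr rfl
  intro g _
  rw [real_inner_smul_left]

lemma inner_pi_move (π : Γ →* (H ≃ₗᵢ[ℝ] H)) (g : Γ) (u w : H) :
    ⟪π g u, w⟫ = ⟪u, π g⁻¹ w⟫ := by
  have h1 : π g (π g⁻¹ w) = w := by
    have : π g * π g⁻¹ = 1 := by rw [← map_mul, mul_inv_cancel, map_one]
    calc π g (π g⁻¹ w) = (π g * π g⁻¹) w := rfl
      _ = w := by rw [this]; rfl
  calc ⟪π g u, w⟫ = ⟪π g u, π g (π g⁻¹ w)⟫ := by rw [h1]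
    _ = ⟪u, π g⁻¹ w⟫ := (π g).inner_map_map u (π g⁻¹ w)

/-- Symmetry of `opOf π f` for symmetric `f`. -/
lemma opOf_symm (π : Γ →* (H ≃ₗᵢ[ℝ] H)) (f : Γ →₀ ℝ)
    (hsym : ∀ g : Γ, f g⁻¹ = f g) (u w : H) :
    ⟪opOf π f u, w⟫ = ⟪u, opOf π f w⟫ := by
  rw [opOf_inner]
  have h2 : ⟪u, opOf π f w⟫ = ∑ g ∈ f.support, f g * ⟪π g⁻¹ u, w⟫ := by
    rw [real_inner_comm, opOf_inner]
    apply Finset.sum_congr rfl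
    intro g _
    have e := inner_pi_move π g w u
    rw [e, real_inner_comm]
  rw [h2]
  refine Finset.sum_equiv (Equiv.inv Γ) ?_ ?_
  · intro i
    simp only [Finsupp.mem_support_iff, Equiv.inv_apply]
    rw [hsym]
  · intro i _
    simp only [Equiv.inv_apply]
    rw [hsym, inv_inv]

lemma opOf_pow_symm (π : Γ →* (H ≃ₗᵢ[ℝ] H)) (f : Γ →₀ ℝ)
    (hsym : ∀ g : Γ, f g⁻¹ = f g) (n : ℕ) (u w : H) :
    ⟪((opOf π f) ^ n) u, w⟫ = ⟪u, ((opOf π f) ^ n) w⟫ := by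
  induction n generalizing u w with
  | zero => simp
  | succ n ih =>
    have hcomm : ∀ z : H, (opOf π f) (((opOf π f) ^ n) z)
        = ((opOf π f) ^ n) ((opOf π f) z) := by
      intro z
      calc (opOf π f) (((opOf π f)^n) z) = ((opOf π f) * (opOf π f)^n) z := rfl
        _ = ((opOf π f)^(n+1)) z := by rw [← pow_succ']
        _ = (((opOf π f)^n) * (opOf π f)) z := by rw [pow_succ]
        _ = ((opOf π f)^n) ((opOf π f) z) := rfl
    rw [pow_succ, ContinuousLinearMap.mul_apply, ContinuousLinearMap.mul_apply]
    calc ⟪((opOf π f)^n) ((opOf π f) u), w⟫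
        = ⟪(opOf π f) u, ((opOf π f)^n) w⟫ := ih _ _
      _ = ⟪u, (opOf π f) (((opOf π f)^n) w)⟫ := opOf_symm π f hsym _ _
      _ = ⟪u, ((opOf π f)^n) ((opOf π f) w)⟫ := by rw [hcomm]

end StmtAux
namespace StmtAux
open scoped RealInnerProductSpace
variable {Γ : Type*} [Group Γ]
variable {H : Type*} [NormedAddCommGroup H] [InnerProductSpace ℝ H]

set_option maxHeartbeats 1000000 in
lemma opNorm_le_of_moment (M : InvMetric Γ) (π : Γ →* (H ≃ₗᵢ[ℝ] H))
    (v : H) (hv : ‖v‖ = 1)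
    (hcyc : Dense ((Submodule.span ℝ (Set.range fun g : Γ => π g v) : Submodule ℝ H) : Set H))
    (φ : Γ → ℝ) (hφ : ∀ g, φ g = ⟪π g v, v⟫) (hpos : ∀ g, 0 ≤ φ g)
    {α R : ℝ} (hα : 0 ≤ α) (hR : 0 < R)
    (hsum : Summable fun g : Γ => Real.exp (-α * M.d g 1) * φ g)
    (f : Γ →₀ ℝ) (hsym : ∀ g : Γ, f g⁻¹ = f g)
    (hpow0 : ∀ (n : ℕ) (k : Γ), 0 ≤ (toMA f ^ n).coeff k)
    (hpow : ∀ (n : ℕ) (k : Γ),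
      (toMA f ^ n).coeff k ≤ R ^ n * Real.exp (-α * M.d k 1)) :
    ‖opOf π f‖ ≤ R := by
  classical
  set S := opOf π f with hS
  set T := ∑' g : Γ, Real.exp (-α * M.d g 1) * φ g with hT
  have hterm0 : ∀ g : Γ, 0 ≤ Real.exp (-α * M.d g 1) * φ g :=
    fun g => mul_nonneg (Real.exp_pos _).le (hpos g)
  have hT0 : 0 ≤ T := tsum_nonneg hterm0
  -- diagonal moment bound
  have hdiag : ∀ (x : Γ) (n : ℕ),
      ⟪(S ^ n) (π x v), π x v⟫ ≤ (Real.exp (2*α*M.d x 1) * T) * R ^ n := by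
    intro x n
    have h1 : (S ^ n) (π x v) = opOf π (toMA f ^ n).coeff (π x v) := by
      rw [opOf_pow]
      rfl
    rw [h1, opOf_inner]
    have hcoef : ∀ k : Γ, ⟪π k (π x v), π x v⟫ = φ (x⁻¹ * k * x) := by
      intro k
      have e1 : π k (π x v) = π (k * x) v := by rw [map_mul]; rfl
      have e2 : π (k * x) v = π x (π (x⁻¹ * k * x) v) := by
        have hgx : x * (x⁻¹ * k * x) = k * x := by group
        calc π (k * x) v = π (x * (x⁻¹ * k * x)) v := by rw [hgx]
          _ = (π x * π (x⁻¹ * k * x)) v := by rw [map_mul]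
          _ = π x (π (x⁻¹ * k * x) v) := rfl
      rw [e1, e2, (π x).inner_map_map, hφ]
    have hsum1 : ∑ k ∈ (toMA f ^ n).coeff.support,
        (toMA f ^ n).coeff k * ⟪π k (π x v), π x v⟫
        ≤ R ^ n * ∑ k ∈ (toMA f ^ n).coeff.support,
          Real.exp (-α * M.d k 1) * φ (x⁻¹ * k * x) := by
      rw [Finset.mul_sum]
      apply Finset.sum_le_sum
      intro k _
      rw [hcoef k]
      calc (toMA f ^ n).coeff k * φ (x⁻¹ * k * x)
          ≤ (R ^ n * Real.exp (-α * M.d k 1)) * φ (x⁻¹ * k * x) :=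
            mul_le_mul_of_nonneg_right (hpow n k) (hpos _)
        _ = R ^ n * (Real.exp (-α * M.d k 1) * φ (x⁻¹ * k * x)) := by ring
    have hsum2 : ∑ k ∈ (toMA f ^ n).coeff.support,
        Real.exp (-α * M.d k 1) * φ (x⁻¹ * k * x)
        ≤ Real.exp (2*α*M.d x 1) * T := by
      have hterm : ∀ k ∈ (toMA f ^ n).coeff.support,
          Real.exp (-α * M.d k 1) * φ (x⁻¹ * k * x)
          ≤ Real.exp (2*α*M.d x 1) *
            (Real.exp (-α * M.d (x⁻¹ * k * x) 1) * φ (x⁻¹ * k * x)) := by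
        intro k _
        have h2 := d_conj_le M x k
        have h3 : Real.exp (-α * M.d k 1)
            ≤ Real.exp (2*α*M.d x 1) * Real.exp (-α * M.d (x⁻¹ * k * x) 1) := by
          rw [← Real.exp_add]
          apply Real.exp_le_exp.2
          nlinarith
        calc Real.exp (-α * M.d k 1) * φ (x⁻¹ * k * x)
            ≤ (Real.exp (2*α*M.d x 1) * Real.exp (-α * M.d (x⁻¹ * k * x) 1)) * φ (x⁻¹ * k * x) :=
              mul_le_mul_of_nonneg_right h3 (hpos _)
          _ = Real.exp (2*α*M.d x 1) *
              (Real.exp (-α * M.d (x⁻¹ * k * x) 1) * φ (x⁻¹ * k * x)) := by ring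
      calc ∑ k ∈ (toMA f ^ n).coeff.support,
          Real.exp (-α * M.d k 1) * φ (x⁻¹ * k * x)
          ≤ ∑ k ∈ (toMA f ^ n).coeff.support,
            Real.exp (2*α*M.d x 1) *
              (Real.exp (-α * M.d (x⁻¹ * k * x) 1) * φ (x⁻¹ * k * x)) :=
            Finset.sum_le_sum hterm
        _ = Real.exp (2*α*M.d x 1) * ∑ k ∈ (toMA f ^ n).coeff.support,
            (Real.exp (-α * M.d (x⁻¹ * k * x) 1) * φ (x⁻¹ * k * x)) := by
            rw [Finset.mul_sum]
        _ ≤ Real.exp (2*α*M.d x 1) * T := by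
            apply mul_le_mul_of_nonneg_left ?_ (Real.exp_pos _).le
            have hinj' : ∀ a ∈ (toMA f ^ n).coeff.support, ∀ b ∈ (toMA f ^ n).coeff.support,
                x⁻¹ * a * x = x⁻¹ * b * x → a = b := by
              intro a _ b _ hab
              have h9 : x * (x⁻¹ * a * x) * x⁻¹ = x * (x⁻¹ * b * x) * x⁻¹ := by rw [hab]
              group at h9
              exact h9
            have himg : ∑ k ∈ (toMA f ^ n).coeff.support,
                (Real.exp (-α * M.d (x⁻¹ * k * x) 1) * φ (x⁻¹ * k * x))
                = ∑ j ∈ (toMA f ^ n).coeff.support.image (fun k => x⁻¹ * k * x),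
                  (Real.exp (-α * M.d j 1) * φ j) :=
              (Finset.sum_image (f := fun j => Real.exp (-α * M.d j 1) * φ j)
                (g := fun k => x⁻¹ * k * x) hinj').symm
            rw [himg]
            exact hsum.sum_le_tsum _ (fun i _ => hterm0 i)
    calc ∑ k ∈ (toMA f ^ n).coeff.support,
        (toMA f ^ n).coeff k * ⟪π k (π x v), π x v⟫
        ≤ R ^ n * (Real.exp (2*α*M.d x 1) * T) :=
          hsum1.trans (mul_le_mul_of_nonneg_left hsum2 (pow_nonneg hR.le n))
      _ = (Real.exp (2*α*M.d x 1) * T) * R ^ n := by ring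
  -- norm bound on unit vectors of the cyclic span
  have hunit : ∀ u : H,
      u ∈ (Submodule.span ℝ (Set.range fun g : Γ => π g v) : Submodule ℝ H) →
      ‖u‖ = 1 → ‖S u‖ ≤ R := by
    intro u humem hu1
    obtain ⟨c, hrep⟩ := Finsupp.mem_span_range_iff_exists_finsupp.1 humem
    set K : ℝ := ∑ i ∈ c.support, |c i| * Real.sqrt (Real.exp (2*α*M.d i 1) * T) with hK
    have hK0 : 0 ≤ K :=
      Finset.sum_nonneg fun i _ => mul_nonneg (abs_nonneg _) (Real.sqrt_nonneg _)
    set aN : ℕ → ℝ := fun n => ‖(S ^ n) u‖ with haNdef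
    have haN0 : ∀ n, 0 ≤ aN n := fun n => norm_nonneg _
    -- growth bound for moments
    have haN : ∀ n, aN n ≤ K * R ^ n := by
      intro n
      have h1 : (S ^ n) u = ∑ i ∈ c.support, c i • ((S ^ n) (π i v)) := by
        rw [← hrep]
        rw [Finsupp.sum]
        rw [map_sum]
        apply Finset.sum_congr rfl
        intro i _
        rw [ContinuousLinearMap.map_smul]
      have h2 : ∀ i : Γ, ‖(S ^ n) (π i v)‖ ≤
          Real.sqrt (Real.exp (2*α*M.d i 1) * T) * R ^ n := by
        intro i
        have hsq : ‖(S ^ n) (π i v)‖ ^ 2 = ⟪(S ^ (n + n)) (π i v), π i v⟫ := by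
          rw [← real_inner_self_eq_norm_sq]
          have e1 : ⟪(S ^ n) (π i v), (S ^ n) (π i v)⟫
              = ⟪π i v, (S ^ n) ((S ^ n) (π i v))⟫ := opOf_pow_symm π f hsym n _ _
          have e2 : (S ^ n) ((S ^ n) (π i v)) = (S ^ (n + n)) (π i v) := by
            rw [pow_add]
            rfl
          rw [e1, e2, real_inner_comm]
        have hb := hdiag i (n + n)
        rw [← hsq] at hb
        have hrhs : Real.exp (2*α*M.d i 1) * T * R ^ (n + n)
            = (Real.sqrt (Real.exp (2*α*M.d i 1) * T) * R ^ n) ^ 2 := by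
          rw [mul_pow, Real.sq_sqrt (mul_nonneg (Real.exp_pos _).le hT0)]
          rw [← pow_mul]
          congr 1
          ring
        rw [hrhs] at hb
        have hrn : 0 ≤ Real.sqrt (Real.exp (2*α*M.d i 1) * T) * R ^ n :=
          mul_nonneg (Real.sqrt_nonneg _) (pow_nonneg hR.le n)
        exact le_of_pow_le_pow_left₀ two_ne_zero hrn hb
      have haNn : aN n = ‖(S ^ n) u‖ := rfl
      calc aN n = ‖∑ i ∈ c.support, c i • ((S ^ n) (π i v))‖ := by rw [haNn, h1]
        _ ≤ ∑ i ∈ c.support, ‖c i • ((S ^ n) (π i v))‖ := norm_sum_le _ _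
        _ ≤ ∑ i ∈ c.support, |c i| * (Real.sqrt (Real.exp (2*α*M.d i 1) * T) * R ^ n) := by
            apply Finset.sum_le_sum
            intro i _
            rw [norm_smul, Real.norm_eq_abs]
            exact mul_le_mul_of_nonneg_left (h2 i) (abs_nonneg _)
        _ = K * R ^ n := by
            rw [hK, Finset.sum_mul]
            apply Finset.sum_congr rfl
            intro i _
            ring
    -- submultiplicative moments
    have ha0 : aN 0 = 1 := by
      have : aN 0 = ‖(S ^ 0) u‖ := rfl
      rw [this, pow_zero, ContinuousLinearMap.one_apply, hu1]
    have hmom : ∀ n, aN 1 * aN n ≤ aN (n + 1) := by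
      intro n
      induction n with
      | zero => rw [ha0, mul_one]
      | succ n ih =>
        have hCS : aN (n+1) ^ 2 ≤ aN n * aN (n+2) := by
          have hb : ∀ m : ℕ, (S ^ (m+1)) u = S ((S ^ m) u) := by
            intro m
            rw [pow_succ']
            rfl
          have e1 : ⟪(S ^ (n+1)) u, (S ^ (n+1)) u⟫ = ⟪(S ^ n) u, (S ^ (n+2)) u⟫ := by
            calc ⟪(S ^ (n+1)) u, (S ^ (n+1)) u⟫
                = ⟪S ((S ^ n) u), (S ^ (n+1)) u⟫ := by rw [← hb n]
              _ = ⟪(S ^ n) u, S ((S ^ (n+1)) u)⟫ := opOf_symm π f hsym _ _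
              _ = ⟪(S ^ n) u, (S ^ (n+2)) u⟫ := by rw [← hb (n+1)]
          have e2 : aN (n+1) ^ 2 = ⟪(S ^ (n+1)) u, (S ^ (n+1)) u⟫ := by
            have : aN (n+1) = ‖(S ^ (n+1)) u‖ := rfl
            rw [this, ← real_inner_self_eq_norm_sq]
          rw [e2, e1]
          exact (real_inner_le_norm _ _)
        rcases eq_or_lt_of_le (haN0 (n+1)) with h0 | hpos'
        · rw [← h0, mul_zero]
          exact haN0 _
        · have h1 : aN 1 * aN (n+1) ^ 2 ≤ aN 1 * (aN n * aN (n+2)) :=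
            mul_le_mul_of_nonneg_left hCS (haN0 1)
          have h2 : (aN 1 * aN n) * aN (n+2) ≤ aN (n+1) * aN (n+2) :=
            mul_le_mul_of_nonneg_right ih (haN0 (n+2))
          nlinarith [haN0 (n+2), haN0 1]
    have hpowa : ∀ n, (aN 1) ^ n ≤ aN n := by
      intro n
      induction n with
      | zero => rw [pow_zero, ha0]
      | succ n ih =>
        calc (aN 1) ^ (n+1) = aN 1 * (aN 1) ^ n := by ring
          _ ≤ aN 1 * aN n := mul_le_mul_of_nonneg_left ih (haN0 1)
          _ ≤ aN (n+1) := hmom n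
    -- conclude aN 1 ≤ R
    have hfin : aN 1 ≤ R := by
      by_contra hlt
      push_neg at hlt
      have hgt1 : 1 < aN 1 / R := (one_lt_div hR).2 hlt
      obtain ⟨n, hn⟩ := pow_unbounded_of_one_lt (max K 1) hgt1
      have h1 : (aN 1) ^ n ≤ K * R ^ n := (hpowa n).trans (haN n)
      have hRn : 0 < R ^ n := pow_pos hR n
      have h2 : (aN 1 / R) ^ n ≤ K := by
        rw [div_pow, div_le_iff₀ hRn]
        exact h1
      have h3 : (aN 1 / R) ^ n ≤ max K 1 := h2.trans (le_max_left _ _)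
      linarith
    have : aN 1 = ‖S u‖ := by
      have h := congrArg norm (congrFun (congrArg DFunLike.coe (pow_one S)) u)
      exact h
    linarith [hfin, this.symm.le]
  -- general vectors of the span
  have hspan : ∀ u : H,
      u ∈ (Submodule.span ℝ (Set.range fun g : Γ => π g v) : Submodule ℝ H) →
      ‖S u‖ ≤ R * ‖u‖ := by
    intro u humem
    rcases eq_or_ne u 0 with h0 | h0
    · rw [h0]
      simp
    · have hni : ‖u‖ ≠ 0 := norm_ne_zero_iff.2 h0
      have hnpos : 0 < ‖u‖ := norm_pos_iff.2 h0
      set u' := ‖u‖⁻¹ • u with hu'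
      have hmem' : u' ∈ (Submodule.span ℝ (Set.range fun g : Γ => π g v) : Submodule ℝ H) :=
        Submodule.smul_mem _ _ humem
      have hn1 : ‖u'‖ = 1 := by
        rw [hu', norm_smul, norm_inv, norm_norm, inv_mul_cancel₀ hni]
      have := hunit u' hmem' hn1
      rw [hu', ContinuousLinearMap.map_smul, norm_smul, norm_inv, norm_norm] at this
      rw [inv_mul_le_iff₀ hnpos] at this
      linarith [this]
  -- density
  apply ContinuousLinearMap.opNorm_le_bound S hR.le
  intro u
  have hclosed : IsClosed {w : H | ‖S w‖ ≤ R * ‖w‖} :=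
    isClosed_le (S.continuous.norm) (continuous_const.mul continuous_norm)
  have hsub : ((Submodule.span ℝ (Set.range fun g : Γ => π g v) : Submodule ℝ H) : Set H)
      ⊆ {w : H | ‖S w‖ ≤ R * ‖w‖} := fun w hw => hspan w hw
  have : closure ((Submodule.span ℝ (Set.range fun g : Γ => π g v) : Submodule ℝ H) : Set H)
      ⊆ {w : H | ‖S w‖ ≤ R * ‖w‖} := hclosed.closure_subset_iff.2 hsub
  exact this (by rw [hcyc.closure_eq]; trivial)

end StmtAux
open StmtAux in
theorem critExp_mono_of_weak_containment' {Γ : Type*} [Group Γ] [Group.FG Γ] (M : InvMetric Γ)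
    (hhyp : IsStronglyHyperbolic M) (hrg : IsRoughlyGeodesic M)
    (hne : 0 < growthExp M)
    {H₁ : Type*} [NormedAddCommGroup H₁] [InnerProductSpace ℝ H₁] [CompleteSpace H₁]
    {H₂ : Type*} [NormedAddCommGroup H₂] [InnerProductSpace ℝ H₂] [CompleteSpace H₂]
    (π₁ : Γ →* (H₁ ≃ₗᵢ[ℝ] H₁)) (v₁ : H₁) (hv₁ : ‖v₁‖ = 1)
    (hcyc₁ : Dense ((Submodule.span ℝ (Set.range fun g : Γ => π₁ g v₁) : Submodule ℝ H₁) : Set H₁))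
    (π₂ : Γ →* (H₂ ≃ₗᵢ[ℝ] H₂)) (v₂ : H₂) (hv₂ : ‖v₂‖ = 1)
    (hcyc₂ : Dense ((Submodule.span ℝ (Set.range fun g : Γ => π₂ g v₂) : Submodule ℝ H₂) : Set H₂))
    (φ₁ φ₂ : Γ → ℝ)
    (hφ₁ : ∀ g, φ₁ g = ⟪π₁ g v₁, v₁⟫) (hpos₁ : ∀ g, 0 ≤ φ₁ g)
    (hφ₂ : ∀ g, φ₂ g = ⟪π₂ g v₂, v₂⟫) (hpos₂ : ∀ g, 0 ≤ φ₂ g)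
    (hge₁ : growthExp M / 2 ≤ critExp M φ₁) (hge₂ : growthExp M / 2 ≤ critExp M φ₂)
    (hweak : ∀ f : Γ →₀ ℝ, ‖opOf π₁ f‖ ≤ ‖opOf π₂ f‖) :
    critExp M φ₁ ≤ critExp M φ₂ := by
  classical
  set δ := growthExp M with hδdef
  apply le_of_forall_pos_le_add
  intro ε hε
  set Sset := {t : ℝ | 0 ≤ t ∧ Summable fun g : Γ => Real.exp (-t * M.d g 1) * φ₂ g}
    with hSset
  have hce : critExp M φ₂ = sInf Sset := rfl
  have hbdd : BddBelow Sset := ⟨0, fun t ht => ht.1⟩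
  have hne2 : Sset.Nonempty := by
    by_contra hemp
    rw [Set.not_nonempty_iff_eq_empty] at hemp
    have h0 : critExp M φ₂ = 0 := by rw [hce, hemp, Real.sInf_empty]
    rw [h0] at hge₂
    linarith
  obtain ⟨t, htmem, htlt⟩ : ∃ t ∈ Sset, t < critExp M φ₂ + ε/2 := by
    have h1 : sInf Sset < critExp M φ₂ + ε/2 := by rw [← hce]; linarith
    exact (csInf_lt_iff hbdd hne2).1 h1
  have ht0 : 0 ≤ t := htmem.1
  have htsum : Summable (fun g : Γ => Real.exp (-t * M.d g 1) * φ₂ g) := htmem.2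
  have htge : critExp M φ₂ ≤ t := by rw [hce]; exact csInf_le hbdd htmem
  have hδ2t : δ/2 ≤ t := le_trans hge₂ htge
  set β := t + ε/2 with hβ
  have htβ : t < β := by rw [hβ]; linarith
  obtain ⟨R, hR0, hconv⟩ := conv_bound M hne hhyp hrg (α := t) (β := β) ht0 htβ
    (by rw [hβ]; linarith)
  -- uniform operator norm bound
  have hopb : ∀ r : ℝ, ‖opOf π₂ (ballWeight M β r)‖ ≤ R := by
    intro r
    have hpows := pow_bound' M ht0 htβ.le hR0 hconv (toMA (ballWeight M β r))
      (fun g => ballWeight_nonneg M β r g) (fun g => ballWeight_le M β r g)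
    exact opNorm_le_of_moment M π₂ v₂ hv₂ hcyc₂ φ₂ hφ₂ hpos₂ ht0 hR0 htsum
      (ballWeight M β r) (fun g => ballWeight_symm M β r g)
      (fun n k => (hpows n k).1) (fun n k => (hpows n k).2)
  -- partial sums of the φ₁-series at β are uniformly bounded
  have hps : ∀ r : ℝ, ∑ g ∈ ball M r, Real.exp (-β * M.d g 1) * φ₁ g ≤ R := by
    intro r
    have hcoef : ⟪opOf π₁ (ballWeight M β r) v₁, v₁⟫
        = ∑ g ∈ ball M r, Real.exp (-β * M.d g 1) * φ₁ g := by
      rw [opOf_inner]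
      rw [show (ballWeight M β r).support = ball M r from rfl]
      apply Finset.sum_congr rfl
      intro g hg
      rw [ballWeight_apply_of_mem M β r (mem_ball.1 hg), hφ₁ g]
    have h1 : ⟪opOf π₁ (ballWeight M β r) v₁, v₁⟫ ≤ ‖opOf π₁ (ballWeight M β r)‖ := by
      calc ⟪opOf π₁ (ballWeight M β r) v₁, v₁⟫
          ≤ ‖opOf π₁ (ballWeight M β r) v₁‖ * ‖v₁‖ := real_inner_le_norm _ _
        _ ≤ (‖opOf π₁ (ballWeight M β r)‖ * ‖v₁‖) * ‖v₁‖ :=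
            mul_le_mul_of_nonneg_right
              ((opOf π₁ (ballWeight M β r)).le_opNorm v₁) (norm_nonneg _)
        _ = ‖opOf π₁ (ballWeight M β r)‖ := by rw [hv₁]; ring
    have h2 := hweak (ballWeight M β r)
    have h3 := hopb r
    rw [hcoef] at h1
    linarith
  -- summability for φ₁ at β
  have hnn : (0 : Γ → ℝ) ≤ fun g => Real.exp (-β * M.d g 1) * φ₁ g :=
    fun g => mul_nonneg (Real.exp_pos _).le (hpos₁ g)
  have hball : ∀ u : Finset Γ, ∑ g ∈ u, Real.exp (-β * M.d g 1) * φ₁ g ≤ R := by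
    intro u
    rcases u.eq_empty_or_nonempty with h | h
    · rw [h, Finset.sum_empty]; exact hR0.le
    · obtain ⟨r, hrr⟩ : ∃ r : ℝ, ∀ g ∈ u, M.d g 1 ≤ r :=
        ⟨(u.image fun g' => M.d g' 1).max' (h.image _),
          fun g hg => Finset.le_max' _ _ (Finset.mem_image_of_mem (fun g' => M.d g' 1) hg)⟩
      have hsub : u ⊆ ball M r := fun g hg => mem_ball.2 (hrr g hg)
      calc ∑ g ∈ u, Real.exp (-β * M.d g 1) * φ₁ g
          ≤ ∑ g ∈ ball M r, Real.exp (-β * M.d g 1) * φ₁ g :=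
            Finset.sum_le_sum_of_subset_of_nonneg hsub
              (fun g _ _ => mul_nonneg (Real.exp_pos _).le (hpos₁ g))
        _ ≤ R := hps r
  have hsummable : Summable (fun g : Γ => Real.exp (-β * M.d g 1) * φ₁ g) :=
    summable_of_sum_le hnn hball
  have hβmem : β ∈ {s : ℝ | 0 ≤ s ∧ Summable fun g : Γ => Real.exp (-s * M.d g 1) * φ₁ g} :=
    ⟨by rw [hβ]; linarith, hsummable⟩
  have hfin : critExp M φ₁ ≤ β := csInf_le ⟨0, fun s hs => hs.1⟩ hβmem
  rw [hβ] at hfin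
  linarith

/-- On a hyperbolic group, for pointwise nonnegative positive definite
functions `φ₁, φ₂` with critical exponents at least `δ/2`, weak containment of the
GNS representations (`‖π₁(f)‖ ≤ ‖π₂(f)‖` for all `f ∈ ℝ[Γ]`) forces
`δ(φ₁) ≤ δ(φ₂)`. -/
theorem critExp_mono_of_weak_containment [Group.FG Γ] (M : InvMetric Γ)
    (hhyp : IsStronglyHyperbolic M) (hrg : IsRoughlyGeodesic M)
    (hne : 0 < growthExp M)
    {H₁ : Type*} [NormedAddCommGroup H₁] [InnerProductSpace ℝ H₁] [CompleteSpace H₁]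
    {H₂ : Type*} [NormedAddCommGroup H₂] [InnerProductSpace ℝ H₂] [CompleteSpace H₂]
    (π₁ : Γ →* (H₁ ≃ₗᵢ[ℝ] H₁)) (v₁ : H₁) (hv₁ : ‖v₁‖ = 1)
    (hcyc₁ : Dense ((Submodule.span ℝ (Set.range fun g : Γ => π₁ g v₁) : Submodule ℝ H₁) : Set H₁))
    (π₂ : Γ →* (H₂ ≃ₗᵢ[ℝ] H₂)) (v₂ : H₂) (hv₂ : ‖v₂‖ = 1)
    (hcyc₂ : Dense ((Submodule.span ℝ (Set.range fun g : Γ => π₂ g v₂) : Submodule ℝ H₂) : Set H₂))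
    (φ₁ φ₂ : Γ → ℝ)
    (hφ₁ : ∀ g, φ₁ g = ⟪π₁ g v₁, v₁⟫) (hpos₁ : ∀ g, 0 ≤ φ₁ g)
    (hφ₂ : ∀ g, φ₂ g = ⟪π₂ g v₂, v₂⟫) (hpos₂ : ∀ g, 0 ≤ φ₂ g)
    (hge₁ : growthExp M / 2 ≤ critExp M φ₁) (hge₂ : growthExp M / 2 ≤ critExp M φ₂)
    (hweak : ∀ f : Γ →₀ ℝ, ‖opOf π₁ f‖ ≤ ‖opOf π₂ f‖) :
    critExp M φ₁ ≤ critExp M φ₂ := by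
  exact critExp_mono_of_weak_containment' M hhyp hrg hne π₁ v₁ hv₁ hcyc₁ π₂ v₂ hv₂ hcyc₂
    φ₁ φ₂ hφ₁ hpos₁ hφ₂ hpos₂ hge₁ hge₂ hweak
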